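/- Let λ₁, λ₂ be coprime positive integers with λ₁ ≡ λ₂ (mod 3), and S = {0, λ₁, λ₁+λ₂}. Then the set A = (3ℤ) ∪ (3ℤ+1) contains no translate of S and no translate of -S, and has density 2/3. Consequently d_f(S, -S) = d_f(S) = 2/3. -/

import Mathlib

open Filter Set

/-- The translateSet `S + t` of a set of integers. -/
def translateSet (S : Set ℤ) (t : ℤ) : Set ℤ := (· + t) '' S

/-- Upper density of a set of integers. -/
noncomputable def upperDensity (A : Set ℤ) : ℝ :=
  Filter.limsup (fun n : ℕ => ((A ∩ Set.Icc (-(n : ℤ)) (n : ℤ)).ncard : ℝ) / (2 * n + 1)) Filter.atTop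

/-- Lower density of a set of integers. -/
noncomputable def lowerDensity (A : Set ℤ) : ℝ :=
  Filter.liminf (fun n : ℕ => ((A ∩ Set.Icc (-(n : ℤ)) (n : ℤ)).ncard : ℝ) / (2 * n + 1)) Filter.atTop

/-- `A` is `S`-covering: every integer lies in some translateSet `S + a`, `a ∈ A`. -/
def SCovering (S A : Set ℤ) : Prop := ∀ t : ℤ, ∃ a ∈ A, t ∈ translateSet S a

/-- `A` is `S`-blocking: `A` meets every translateSet of `S`. -/
def SBlocking (S A : Set ℤ) : Prop := ∀ t : ℤ, (A ∩ translateSet S t).Nonempty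

/-- `A` is `S`-free: `A` contains no translateSet of `S`. -/
def SFree (S A : Set ℤ) : Prop := ∀ t : ℤ, ¬ translateSet S t ⊆ A

/-- `A` is `S`-packing: distinct translates `S + a₁`, `S + a₂` with `a₁, a₂ ∈ A` are disjoint. -/
def SPacking (S A : Set ℤ) : Prop :=
  ∀ a₁ ∈ A, ∀ a₂ ∈ A, a₁ ≠ a₂ → Disjoint (translateSet S a₁) (translateSet S a₂)

/-- Maximum packing density of `S`. -/
noncomputable def dP (S : Set ℤ) : ℝ := sSup (upperDensity '' {A | SPacking S A})

/-- Minimum covering density of `S`. -/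
noncomputable def dC (S : Set ℤ) : ℝ := sInf (lowerDensity '' {A | SCovering S A})

/-- Minimum blocking density of `S`. -/
noncomputable def dB (S : Set ℤ) : ℝ := sInf (lowerDensity '' {A | SBlocking S A})

/-- `d_f(S)`: supremum of upper densities of `S`-free sets. -/
noncomputable def dF (S : Set ℤ) : ℝ := sSup (upperDensity '' {A | SFree S A})

/-- `d_f(S, -S)`: supremum of upper densities of sets free of translates of both `S` and `-S`. -/
noncomputable def dF2 (S : Set ℤ) : ℝ := sSup (upperDensity '' {A | SFree S A ∧ SFree (-S) A})

/-! ### Auxiliary lemmas -/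

lemma inter_Icc_ncard' (p : ℤ → Prop) [DecidablePred p] (a b : ℤ) :
    ({x | p x} ∩ Set.Icc a b).ncard = ((Finset.Icc a b).filter p).card := by
  rw [← Set.ncard_coe_finset]
  congr 1
  ext x
  simp [Finset.mem_filter, and_comm]

lemma bad_count' (n : ℕ) :
    ((Finset.Icc (-(n:ℤ)) n).filter (fun x => x % 3 = 2)).card
      = (((n:ℤ) - 2)/3 + ((n:ℤ)+2)/3 + 1).toNat := by
  have himg : (Finset.Icc (-(n:ℤ)) n).filter (fun x => x % 3 = 2)
      = (Finset.Icc (-(((n:ℤ)+2)/3)) (((n:ℤ)-2)/3)).image (fun k => 3*k+2) := by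
    ext x
    simp only [Finset.mem_filter, Finset.mem_image, Finset.mem_Icc]
    constructor
    · rintro ⟨⟨ha, hb⟩, h3⟩
      exact ⟨(x-2)/3, by omega, by omega⟩
    · rintro ⟨k, ⟨ha, hb⟩, rfl⟩
      omega
  rw [himg, Finset.card_image_of_injective _ (fun a b h => by omega), Int.card_Icc]
  congr 1; ring

lemma good_count' (n : ℕ) :
    ({x : ℤ | x % 3 = 0 ∨ x % 3 = 1} ∩ Set.Icc (-(n:ℤ)) n).ncard
      + (((n:ℤ) - 2)/3 + ((n:ℤ)+2)/3 + 1).toNat = 2*n + 1 := by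
  rw [inter_Icc_ncard' (fun x => x % 3 = 0 ∨ x % 3 = 1), ← bad_count' n]
  have heq : (Finset.Icc (-(n:ℤ)) n).filter (fun x => x % 3 = 0 ∨ x % 3 = 1)
      = (Finset.Icc (-(n:ℤ)) n).filter (fun x => ¬ (x % 3 = 2)) := by
    apply Finset.filter_congr
    intro x _
    constructor <;> intro h <;> omega
  rw [heq, add_comm, Finset.card_filter_add_card_filter_not, Int.card_Icc]
  omega

lemma denom_tendsto' : Tendsto (fun n : ℕ => (2:ℝ) * n + 1) atTop atTop := by
  apply tendsto_atTop_add_const_right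
  exact (tendsto_natCast_atTop_atTop (R := ℝ)).const_mul_atTop (by norm_num)

lemma aux_tendsto' (c : ℝ) : Tendsto (fun n : ℕ => c / (2 * (n:ℝ) + 1)) atTop (nhds 0) :=
  Tendsto.div_atTop tendsto_const_nhds denom_tendsto'

lemma good_tendsto' :
    Tendsto (fun n : ℕ =>
      (({x : ℤ | x % 3 = 0 ∨ x % 3 = 1} ∩ Set.Icc (-(n:ℤ)) n).ncard : ℝ) / (2 * n + 1))
      atTop (nhds (2/3)) := by
  rw [← tendsto_sub_nhds_zero_iff]
  apply squeeze_zero_norm (a := fun n : ℕ => 2 / (2 * (n:ℝ) + 1)) _ (aux_tendsto' 2)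
  intro n
  have hd : (0:ℝ) < 2 * n + 1 := by positivity
  set c := ({x : ℤ | x % 3 = 0 ∨ x % 3 = 1} ∩ Set.Icc (-(n:ℤ)) n).ncard with hc
  have hint : 2 * (2 * (n:ℤ) + 1) - 6 ≤ 3 * (c:ℤ) ∧ 3 * (c:ℤ) ≤ 2 * (2 * (n:ℤ) + 1) + 6 := by
    have := good_count' n
    omega
  have hreal : |(c:ℝ) - 2/3 * (2 * n + 1)| ≤ 2 := by
    rw [abs_le]
    obtain ⟨ha, hb⟩ := hint
    have ha' : (2:ℝ) * (2 * n + 1) - 6 ≤ 3 * c := by exact_mod_cast ha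
    have hb' : (3:ℝ) * c ≤ 2 * (2 * n + 1) + 6 := by exact_mod_cast hb
    constructor <;> nlinarith
  rw [Real.norm_eq_abs, show (c:ℝ) / (2 * n + 1) - 2/3 = ((c:ℝ) - 2/3 * (2 * n + 1)) / (2 * n + 1) by field_simp,
    abs_div, abs_of_pos hd, div_le_div_iff₀ (by positivity) hd]
  calc |(c:ℝ) - 2/3 * (2 * n + 1)| * (2 * n + 1) ≤ 2 * (2 * n + 1) := by
        apply mul_le_mul_of_nonneg_right hreal hd.le
    _ = _ := by ring

open Classical in
lemma sfree_card_bound' (l1 l2 : ℤ) (h1 : 0 < l1) (h2 : 0 < l2) (B : Set ℤ)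
    (hB : SFree {0, l1, l1 + l2} B) (n : ℕ) :
    3 * (B ∩ Set.Icc (-(n:ℤ)) n).ncard ≤ 2 * (2 * n + 1) + 3 * (l1 + l2).toNat := by
  have hex : ∀ t : ℤ, ∃ x, x ∈ translateSet ({0, l1, l1 + l2} : Set ℤ) t ∧ x ∉ B := by
    intro t
    obtain ⟨x, hx, hxB⟩ := Set.not_subset.mp (hB t)
    exact ⟨x, hx, hxB⟩
  choose g hg1 hg2 using hex
  have hg1' : ∀ t : ℤ, g t = t ∨ g t = l1 + t ∨ g t = l1 + l2 + t := by
    intro t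
    have h := hg1 t
    simp only [translateSet, Set.mem_image, Set.mem_insert_iff, Set.mem_singleton_iff] at h
    obtain ⟨s, hs, hst⟩ := h
    rcases hs with rfl | rfl | rfl <;> omega
  set T := Finset.Icc (-(n:ℤ)) n with hT
  set M := (Finset.Icc (-(n:ℤ)) ((n:ℤ) + (l1 + l2))).filter (fun x => x ∉ B) with hM
  have hmaps : ∀ t ∈ T, g t ∈ M := by
    intro t ht
    simp only [hT, hM, Finset.mem_filter, Finset.mem_Icc] at ht ⊢
    refine ⟨?_, hg2 t⟩
    rcases hg1' t with h | h | h <;> omega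
  have hcard : T.card ≤ 3 * M.card := by
    apply Finset.card_le_mul_card_image_of_maps_to hmaps
    intro x hx
    have hsub : T.filter (fun t => g t = x) ⊆ ({x, x - l1, x - (l1 + l2)} : Finset ℤ) := by
      intro t ht
      simp only [Finset.mem_filter] at ht
      obtain ⟨-, hgt⟩ := ht
      simp only [Finset.mem_insert, Finset.mem_singleton]
      rcases hg1' t with h | h | h <;> omega
    calc (T.filter (fun t => g t = x)).card ≤ ({x, x - l1, x - (l1 + l2)} : Finset ℤ).card :=
          Finset.card_le_card hsub
      _ ≤ 3 := by
          apply le_trans (Finset.card_insert_le _ _)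
          have := Finset.card_insert_le (x - l1) ({x - (l1 + l2)} : Finset ℤ)
          simp at this ⊢
          omega
  have hnc : (B ∩ Set.Icc (-(n:ℤ)) n).ncard = (T.filter (fun x => x ∈ B)).card := by
    have := inter_Icc_ncard' (fun x => x ∈ B) (-(n:ℤ)) n
    simpa using this
  have hsplit : (T.filter (fun x => x ∈ B)).card + (T.filter (fun x => x ∉ B)).card = T.card :=
    Finset.card_filter_add_card_filter_not _
  have hMsub : M ⊆ T.filter (fun x => x ∉ B) ∪ Finset.Icc ((n:ℤ) + 1) ((n:ℤ) + (l1 + l2)) := by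
    intro x hx
    simp only [hM, hT, Finset.mem_filter, Finset.mem_Icc, Finset.mem_union] at hx ⊢
    rcases le_or_gt x n with hxn | hxn
    · exact Or.inl ⟨⟨hx.1.1, hxn⟩, hx.2⟩
    · exact Or.inr ⟨by omega, hx.1.2⟩
  have hMcard : M.card ≤ (T.filter (fun x => x ∉ B)).card + (l1 + l2).toNat := by
    calc M.card ≤ (T.filter (fun x => x ∉ B) ∪ Finset.Icc ((n:ℤ) + 1) ((n:ℤ) + (l1 + l2))).card :=
          Finset.card_le_card hMsub
      _ ≤ _ := by
          apply le_trans (Finset.card_union_le _ _)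
          have : (Finset.Icc ((n:ℤ) + 1) ((n:ℤ) + (l1 + l2))).card = (l1 + l2).toNat := by
            rw [Int.card_Icc]; omega
          omega
  have hTcard : T.card = 2 * n + 1 := by
    rw [hT, Int.card_Icc]; omega
  omega

lemma ub_of_card_bound' (B : Set ℤ) (K : ℕ)
    (hbd : ∀ n : ℕ, 3 * (B ∩ Set.Icc (-(n:ℤ)) n).ncard ≤ 2 * (2 * n + 1) + 3 * K) :
    upperDensity B ≤ 2 / 3 := by
  have hle : ∀ n : ℕ, ((B ∩ Set.Icc (-(n:ℤ)) n).ncard : ℝ) / (2 * n + 1)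
      ≤ 2 / 3 + (K : ℝ) / (2 * n + 1) := by
    intro n
    have hd : (0:ℝ) < 2 * n + 1 := by positivity
    have h3 : (3:ℝ) * ((B ∩ Set.Icc (-(n:ℤ)) n).ncard : ℝ) ≤ 2 * (2 * (n:ℝ) + 1) + 3 * K := by
      exact_mod_cast hbd n
    rw [div_le_iff₀ hd]
    have he : (2/3 + (K:ℝ)/(2 * n + 1)) * (2 * n + 1) = 2/3 * (2 * n + 1) + K := by
      field_simp
    rw [he]
    linarith
  have hgl : Tendsto (fun n : ℕ => 2 / 3 + (K:ℝ) / (2 * n + 1)) atTop (nhds (2/3)) := by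
    have := (aux_tendsto' (K:ℝ)).const_add (2/3 : ℝ)
    simpa using this
  have hub : upperDensity B ≤ limsup (fun n : ℕ => 2 / 3 + (K:ℝ) / (2 * n + 1)) atTop := by
    refine Filter.limsup_le_limsup (Filter.Eventually.of_forall hle) ?_ ?_
    · refine Filter.IsBoundedUnder.isCoboundedUnder_le ?_
      exact Filter.isBoundedUnder_of ⟨0, fun n => by positivity⟩
    · exact Filter.isBoundedUnder_of ⟨2/3 + K, fun n => by
        have hd : (0:ℝ) < 2 * n + 1 := by positivity
        have : (K:ℝ) / (2 * n + 1) ≤ K := by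
          rw [div_le_iff₀ hd]; nlinarith [Nat.cast_nonneg (α := ℝ) K]
        linarith⟩
  rwa [hgl.limsup_eq] at hub

theorem stmt3 (l1 l2 : ℤ) (h1 : 0 < l1) (h2 : 0 < l2) (hco : Int.gcd l1 l2 = 1)
    (hmod : l1 % 3 = l2 % 3) :
    SFree ({0, l1, l1 + l2} : Set ℤ) {x : ℤ | x % 3 = 0 ∨ x % 3 = 1} ∧
    SFree (-({0, l1, l1 + l2} : Set ℤ)) {x : ℤ | x % 3 = 0 ∨ x % 3 = 1} ∧
    upperDensity {x : ℤ | x % 3 = 0 ∨ x % 3 = 1} = 2 / 3 ∧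
    lowerDensity {x : ℤ | x % 3 = 0 ∨ x % 3 = 1} = 2 / 3 ∧
    dF2 ({0, l1, l1 + l2} : Set ℤ) = 2 / 3 ∧
    dF ({0, l1, l1 + l2} : Set ℤ) = 2 / 3 := by
  set A : Set ℤ := {x : ℤ | x % 3 = 0 ∨ x % 3 = 1} with hA
  set S : Set ℤ := {0, l1, l1 + l2} with hS
  -- not both divisible by 3
  have h3 : ¬ (l1 % 3 = 0 ∧ l2 % 3 = 0) := by
    rintro ⟨ha, hb⟩
    have hd1 : (3:ℤ) ∣ l1 := by omega
    have hd2 : (3:ℤ) ∣ l2 := by omega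
    have := Int.dvd_gcd hd1 hd2
    rw [hco] at this
    norm_num at this
  -- S-freeness
  have hfree : SFree S A := by
    intro t hsub
    have e0 : (0:ℤ) + t ∈ A := hsub ⟨0, by simp [hS], rfl⟩
    have e1 : l1 + t ∈ A := hsub ⟨l1, by simp [hS], rfl⟩
    have e2 : l1 + l2 + t ∈ A := hsub ⟨l1 + l2, by simp [hS], rfl⟩
    simp only [hA, Set.mem_setOf_eq] at e0 e1 e2
    omega
  have hfree' : SFree (-S) A := by
    intro t hsub
    have e0 : (0:ℤ) + t ∈ A := hsub ⟨0, by simp [hS], rfl⟩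
    have e1 : (-l1) + t ∈ A := hsub ⟨-l1, by simp [hS], rfl⟩
    have e2 : (-(l1 + l2)) + t ∈ A := hsub ⟨-(l1 + l2), by simp [hS], rfl⟩
    simp only [hA, Set.mem_setOf_eq] at e0 e1 e2
    omega
  -- densities of A
  have hup : upperDensity A = 2 / 3 := good_tendsto'.limsup_eq
  have hlow : lowerDensity A = 2 / 3 := good_tendsto'.liminf_eq
  -- upper bound for every S-free set
  have hub : ∀ B : Set ℤ, SFree S B → upperDensity B ≤ 2 / 3 := by
    intro B hB
    exact ub_of_card_bound' B (l1 + l2).toNat (sfree_card_bound' l1 l2 h1 h2 B hB)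
  have hdF : dF S = 2 / 3 := by
    apply IsGreatest.csSup_eq
    constructor
    · exact ⟨A, hfree, hup⟩
    · rintro y ⟨B, hB, rfl⟩
      exact hub B hB
  have hdF2 : dF2 S = 2 / 3 := by
    apply IsGreatest.csSup_eq
    constructor
    · exact ⟨A, ⟨hfree, hfree'⟩, hup⟩
    · rintro y ⟨B, hB, rfl⟩
      exact hub B hB.1
  exact ⟨hfree, hfree', hup, hlow, hdF2, hdF⟩
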